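/- For odd positive integers m, the twisted Gauss-type sum ∑_{j mod 2m} (m/j) e(j/8) vanishes unless m = 2n² for some integer n — which is impossible for odd m — and for even m the sum ∑_{j mod 2m} (m/j) e(j/8) vanishes unless m = 2n², in which case it equals √2 · φ(2n²). Formally: for every even positive integer m, ∑_{j=0}^{2m−1} (m/j) e^{2πi j/8} = √2 · φ(m) if m is twice a perfect square, and 0 otherwise. -/

import Mathlib

open Real
open scoped Classical

/-- The Kronecker symbol factor at 2: (m/2) = 0 if m even, 1 if m ≡ ±1 mod 8,
−1 if m ≡ ±3 mod 8. -/
def kronTwo (m : ℤ) : ℤ :=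
  if m % 2 = 0 then 0 else if m % 8 = 1 ∨ m % 8 = 7 then 1 else -1

/-- The Kronecker symbol (m/j) with lower entry j ≥ 0: multiplicative in j, equal to the
Jacobi symbol on the odd part of j, with the factor at 2 given by `kronTwo`, and with
(m/0) = 1 if m = ±1 and 0 otherwise. -/
def kron (m : ℤ) (j : ℕ) : ℤ :=
  if j = 0 then (if m = 1 ∨ m = -1 then 1 else 0)
  else kronTwo m ^ (j.factorization 2) * jacobiSym m (j / 2 ^ j.factorization 2)


lemma jac_congr (u : ℕ) {a b : ℕ} (h : a ≡ b [MOD u]) : jacobiSym a u = jacobiSym b u := by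
  apply jacobiSym.mod_left'
  have h' : a % u = b % u := h
  omega

noncomputable def Ee (j : ℕ) : ℂ := Complex.exp (2 * π * Complex.I * j / 8)

noncomputable def Ac (u e a : ℕ) : ℂ :=
  if a % 2 = 1 then (((ZMod.χ₈ a) ^ e * (-1) ^ (u / 2 * (a / 2)) : ℤ) : ℂ) * Ee a else 0

noncomputable def Bc (u j : ℕ) : ℂ := ((jacobiSym j u : ℤ) : ℂ)

lemma kron_even {m : ℤ} (hm : m % 2 = 0) (hm1 : 1 < m) {j : ℕ} (hj : j % 2 = 0) :
    kron m j = 0 := by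
  rcases eq_or_ne j 0 with rfl | hj0
  · have h : ¬(m = 1 ∨ m = -1) := by omega
    simp [kron, h]
  · have h2 : (2:ℕ) ∣ j := by omega
    have hpos : 0 < j.factorization 2 := Nat.Prime.factorization_pos_of_dvd Nat.prime_two hj0 h2
    rw [kron, if_neg hj0, kronTwo, if_pos hm, zero_pow hpos.ne', zero_mul]

lemma kron_odd (m : ℤ) {j : ℕ} (hj : j % 2 = 1) : kron m j = jacobiSym m j := by
  have hj0 : j ≠ 0 := by omega
  have h : j.factorization 2 = 0 :=
    Nat.factorization_eq_zero_of_not_dvd (by omega)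
  rw [kron, if_neg hj0, h]
  simp
lemma Ee_add_mul (j k : ℕ) : Ee (j + 8 * k) = Ee j := by
  unfold Ee
  push_cast
  rw [show 2 * (π:ℂ) * Complex.I * (j + 8 * k) / 8
      = 2 * (π:ℂ) * Complex.I * j / 8 + k * (2 * π * Complex.I) by ring,
    Complex.exp_add, Complex.exp_nat_mul_two_pi_mul_I, mul_one]

lemma Ee_mod (j : ℕ) : Ee j = Ee (j % 8) := by
  conv_lhs => rw [show j = j % 8 + 8 * (j / 8) from by omega]
  rw [Ee_add_mul]

lemma neg_one_pow_mod8 (u j : ℕ) :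
    ((-1 : ℤ)) ^ (u / 2 * (j / 2)) = (-1 : ℤ) ^ (u / 2 * (j % 8 / 2)) := by
  have h : j / 2 = j % 8 / 2 + 4 * (j / 8) := by omega
  rw [h, Nat.mul_add, pow_add]
  have : Even (u / 2 * (4 * (j / 8))) := by
    refine Even.mul_left ?_ _
    exact ⟨2 * (j/8), by ring⟩
  rw [this.neg_one_pow, mul_one]
lemma jac_decomp (u e : ℕ) (hu : Odd u) {j : ℕ} (hjo : j % 2 = 1) :
    jacobiSym ((2^e*u : ℕ) : ℤ) j
      = (ZMod.χ₈ j)^e * ((-1:ℤ)^(u/2*(j/2)) * jacobiSym (j : ℤ) u) := by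
  have hoj : Odd j := Nat.odd_iff.mpr hjo
  have hm : ((2^e * u : ℕ) : ℤ) = (2:ℤ)^e * (u:ℤ) := by push_cast; ring
  rw [hm, jacobiSym.mul_left, jacobiSym.pow_left, jacobiSym.at_two hoj,
    jacobiSym.quadratic_reciprocity hu hoj]
lemma f_eq (u e : ℕ) (hu : Odd u) (hu0 : 0 < u) (he : 1 ≤ e) (j : ℕ) :
    ((kron ((2^e * u : ℕ) : ℤ) j : ℤ) : ℂ) * Ee j = Ac u e (j % 8) * Bc u j := by
  have h2e : 2 ≤ 2^e := by
    calc 2 = 2^1 := rfl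
    _ ≤ 2^e := Nat.pow_le_pow_right (by norm_num) he
  have h2m : 2 ≤ 2^e * u := le_trans h2e (Nat.le_mul_of_pos_right _ hu0)
  rcases Nat.even_or_odd j with hj | hj
  · have hj2 : j % 2 = 0 := Nat.even_iff.mp hj
    have hdvd : (2:ℕ) ∣ 2^e * u := dvd_mul_of_dvd_left (dvd_pow_self 2 (by omega)) u
    obtain ⟨c, hc⟩ := hdvd
    have hmod : ((2^e*u : ℕ):ℤ) % 2 = 0 := by rw [hc]; push_cast; omega
    have hgt : (1:ℤ) < ((2^e*u : ℕ):ℤ) := by exact_mod_cast h2m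
    rw [kron_even hmod hgt hj2, Ac, if_neg (by omega)]
    simp
  · have hj2 : j % 2 = 1 := Nat.odd_iff.mp hj
    have hj82 : j % 8 % 2 = 1 := by omega
    rw [kron_odd _ hj2, jac_decomp u e hu hj2, Ac, if_pos hj82, Bc]
    rw [ZMod.χ₈_nat_mod_eight, ← neg_one_pow_mod8, ← Ee_mod]
    push_cast
    ring

lemma sum_range_mul_blocks (f : ℕ → ℂ) (n k : ℕ) :
    ∑ j ∈ Finset.range (k * n), f j
      = ∑ i ∈ Finset.range k, ∑ a ∈ Finset.range n, f (n * i + a) := by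
  induction k with
  | zero => simp
  | succ k ih =>
      rw [Nat.succ_mul, Finset.sum_range_add, ih, Finset.sum_range_succ]
      simp [Nat.mul_comm]

lemma sum_range_zmod (u : ℕ) [NeZero u] (F : ZMod u → ℂ) :
    ∑ i ∈ Finset.range u, F i = ∑ x : ZMod u, F x := by
  apply Finset.sum_nbij (i := fun (i : ℕ) => (i : ZMod u))
  · intro a _; exact Finset.mem_univ _
  · intro a ha b hb h
    simp only [Finset.coe_range, Set.mem_Iio] at ha hb
    rwa [ZMod.natCast_eq_natCast_iff, Nat.ModEq, Nat.mod_eq_of_lt ha, Nat.mod_eq_of_lt hb] at h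
  · intro x _
    exact ⟨x.val, by simp [ZMod.val_lt x, Finset.mem_coe, Finset.mem_range], by simp [ZMod.natCast_val, ZMod.val_lt]⟩
  · intro a _; rfl

-- unit translation invariance of sums over ZMod u
lemma sum_zmod_affine (u : ℕ) [NeZero u] (F : ZMod u → ℂ) (c : ZMod u) (w : (ZMod u)ˣ) :
    ∑ x : ZMod u, F (c + (w : ZMod u) * x) = ∑ x : ZMod u, F x := by
  have h1 := Equiv.sum_comp (Units.mulLeft w) (fun y => F (c + y))
  simp only [Units.mulLeft_apply] at h1
  have h2 := Equiv.sum_comp (Equiv.addLeft c) F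
  simp only [Equiv.coe_addLeft] at h2
  rw [h1, h2]

lemma exists_odd_factorization {u : ℕ} (hu0 : 0 < u) (hns : ¬ IsSquare u) :
    ∃ p, p.Prime ∧ Odd (u.factorization p) := by
  by_contra h
  push_neg at h
  apply hns
  refine ⟨u.factorization.prod fun p k => p ^ (k / 2), ?_⟩
  conv_lhs => rw [← Nat.factorization_prod_pow_eq_self hu0.ne']
  rw [Finsupp.prod, Finsupp.prod, ← Finset.prod_mul_distrib]
  apply Finset.prod_congr rfl
  intro p hp
  rw [← pow_add]
  congr 1
  have hpp : p.Prime := Nat.prime_of_mem_primeFactors (by simpa using hp)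
  have : ¬ Odd (u.factorization p) := h p hpp
  rw [Nat.odd_iff] at this
  omega

lemma jac_neg_one_exists {u : ℕ} (hu : Odd u) (hu0 : 0 < u) (hns : ¬ IsSquare u) :
    ∃ c : ℕ, Nat.Coprime c u ∧ jacobiSym c u = -1 := by
  obtain ⟨p, hp, hodd⟩ := exists_odd_factorization hu0 hns
  haveI : Fact p.Prime := ⟨hp⟩
  have hk0 : u.factorization p ≠ 0 := by
    intro h0; rw [h0] at hodd; simp at hodd
  have hpdvd : p ∣ u := Nat.dvd_of_factorization_pos hk0
  have hp2 : p ≠ 2 := by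
    rintro rfl
    rw [Nat.odd_iff] at hu
    omega
  -- nonsquare mod p
  obtain ⟨b, hb⟩ := FiniteField.exists_nonsquare (F := ZMod p)
    (by rwa [ZMod.ringChar_zmod_n])
  have hb0 : b ≠ 0 := fun h => hb (h ▸ ⟨0, by simp⟩)
  set k := u.factorization p with hk
  set t := u / p ^ k with ht
  have hut : p ^ k * t = u := Nat.ordProj_mul_ordCompl_eq_self u p
  have htdvd : ¬ p ∣ t := Nat.not_dvd_ordCompl hp hu0.ne'
  have ht0 : t ≠ 0 := by
    intro h0; rw [h0, mul_zero] at hut; omega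
  have hcop : Nat.Coprime (p ^ k) t := Nat.Coprime.pow_left _ (hp.coprime_iff_not_dvd.mpr htdvd)
  obtain ⟨c, hc1, hc2⟩ := Nat.chineseRemainder hcop b.val 1
  have hcmodp : (c : ZMod p) = b := by
    have : c ≡ b.val [MOD p] := (hc1 : c ≡ b.val [MOD p ^ k]).of_dvd (dvd_pow_self p hk0)
    rw [(ZMod.natCast_eq_natCast_iff _ _ _).mpr this, ZMod.natCast_val, ZMod.cast_id]
  have hcp : ¬ (p ∣ c) := by
    intro hdvd
    apply hb0
    rw [← hcmodp, (ZMod.natCast_eq_zero_iff c p).mpr hdvd]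
  have hccop_pk : Nat.Coprime c (p ^ k) := Nat.Coprime.pow_right _ (hp.coprime_iff_not_dvd.mpr hcp).symm
  have hccop_t : Nat.Coprime c t := by
    have h1 : Nat.gcd t c = 1 := by
      rw [Nat.gcd_rec, (hc2 : c ≡ 1 [MOD t]), ← Nat.gcd_rec, Nat.gcd_one_right]
    exact Nat.Coprime.symm h1
  have hccop : Nat.Coprime c u := by
    rw [← hut]; exact Nat.Coprime.mul_right hccop_pk hccop_t
  refine ⟨c, hccop, ?_⟩
  haveI : NeZero t := ⟨ht0⟩
  haveI : NeZero (p ^ k) := ⟨pow_ne_zero _ hp.pos.ne'⟩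
  have hsplit : jacobiSym c u = jacobiSym c (p ^ k) * jacobiSym c t := by
    rw [← hut, jacobiSym.mul_right]
  have hct : jacobiSym c t = 1 := by
    rw [jac_congr t (hc2 : c ≡ 1 [MOD t])]
    exact_mod_cast jacobiSym.one_left t
  have hleg : legendreSym p c = -1 := by
    rw [legendreSym.eq_neg_one_iff']
    rwa [hcmodp]
  have hcpk : jacobiSym c (p ^ k) = -1 := by
    rw [jacobiSym.pow_right, ← jacobiSym.legendreSym.to_jacobiSym, hleg, Odd.neg_one_pow hodd]
  rw [hsplit, hct, hcpk, mul_one]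

lemma Bc_cast (u : ℕ) [NeZero u] (j : ℕ) : Bc u j = Bc u ((j : ZMod u)).val := by
  unfold Bc
  congr 1
  exact_mod_cast jac_congr u (by rw [ZMod.val_natCast]; exact (Nat.mod_modEq j u).symm)

lemma sumB (u : ℕ) (hu : Odd u) (hu0 : 0 < u) :
    ∑ j ∈ Finset.range u, Bc u j = if IsSquare u then (u.totient : ℂ) else 0 := by
  haveI : NeZero u := ⟨hu0.ne'⟩
  by_cases hsq : IsSquare u
  · rw [if_pos hsq]
    obtain ⟨v, hv⟩ := hsq
    have hv0 : v ≠ 0 := by rintro rfl; simp [hv] at hu0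
    haveI : NeZero v := ⟨hv0⟩
    have key : ∀ j : ℕ, Bc u j = if Nat.Coprime j u then 1 else 0 := by
      intro j
      unfold Bc
      by_cases hco : Nat.Coprime j u
      · rw [if_pos hco]
        have hco' : Int.gcd (j : ℤ) v = 1 := by
          have : Nat.Coprime j v := Nat.Coprime.coprime_dvd_right ⟨v, hv ▸ rfl⟩ hco
          simpa [Int.gcd_natCast_natCast] using this
        have : jacobiSym (j : ℤ) u = jacobiSym (j:ℤ) v ^ 2 := by
          rw [hv, ← sq, jacobiSym.pow_right]
        rw [this, jacobiSym.sq_one hco']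
        norm_num
      · rw [if_neg hco]
        have : jacobiSym (j : ℤ) u = 0 := by
          rw [jacobiSym.eq_zero_iff_not_coprime]
          simpa [Int.gcd_natCast_natCast] using hco
        rw [this]; norm_num
    rw [Finset.sum_congr rfl fun j _ => key j]
    rw [Finset.sum_boole]
    congr 1
    rw [Nat.totient]
    congr 1
    apply Finset.filter_congr
    intro x _
    simp [Nat.coprime_comm]
  · rw [if_neg hsq]
    obtain ⟨c, hcop, hc⟩ := jac_neg_one_exists hu hu0 hsq
    set F : ZMod u → ℂ := fun x => Bc u x.val with hF
    have hsum : ∑ j ∈ Finset.range u, Bc u j = ∑ x : ZMod u, F x := by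
      rw [← sum_range_zmod u F]
      exact Finset.sum_congr rfl fun j _ => Bc_cast u j
    rw [hsum]
    set w : (ZMod u)ˣ := ZMod.unitOfCoprime c hcop with hw
    have hkey : ∀ x : ZMod u, F ((0 : ZMod u) + (w : ZMod u) * x) = -F x := by
      intro x
      rw [zero_add]
      have hwc : (w : ZMod u) = (c : ℕ) := ZMod.coe_unitOfCoprime c hcop
      have hval : ((c : ZMod u) * x).val ≡ c * x.val [MOD u] := by
        rw [← ZMod.natCast_eq_natCast_iff]
        push_cast
        rw [ZMod.natCast_val, ZMod.cast_id, ZMod.natCast_val, ZMod.cast_id]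
      show Bc u ((c : ZMod u) * x).val = - Bc u x.val
      unfold Bc
      rw [jac_congr u hval]
      have h5 : ((c * x.val : ℕ) : ℤ) = (c : ℤ) * (x.val : ℤ) := by push_cast; ring
      rw [h5, jacobiSym.mul_left, hc]
      push_cast
      ring
    have h2 : ∑ x : ZMod u, F x = -∑ x : ZMod u, F x := by
      conv_lhs => rw [← sum_zmod_affine u F 0 w]
      rw [Finset.sum_congr rfl fun x _ => hkey x, ← Finset.sum_neg_distrib]
    have h3 : (2:ℂ) * ∑ x : ZMod u, F x = 0 := by linear_combination h2
    rcases mul_eq_zero.mp h3 with h4 | h4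
    · norm_num at h4
    · exact h4
noncomputable def zet : ℂ := Complex.exp (2 * π * Complex.I / 8)

lemma Ee_eq_pow (a : ℕ) : Ee a = zet ^ a := by
  unfold Ee zet
  rw [← Complex.exp_nat_mul]
  congr 1
  push_cast
  ring

lemma zet_sq : zet ^ 2 = Complex.I := by
  unfold zet
  rw [← Complex.exp_nat_mul]
  have : (2:ℕ) * (2 * (π:ℂ) * Complex.I / 8) = ((π/2 : ℝ) : ℂ) * Complex.I := by
    push_cast; ring
  rw [this, Complex.exp_mul_I, ← Complex.ofReal_cos, ← Complex.ofReal_sin,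
    Real.cos_pi_div_two, Real.sin_pi_div_two]
  simp

lemma zet_pow_four : zet ^ 4 = -1 := by
  have : zet ^ 4 = (zet ^ 2) ^ 2 := by ring
  rw [this, zet_sq, Complex.I_sq]

lemma zet_val : zet = ((Real.sqrt 2 : ℝ) : ℂ)/2 + ((Real.sqrt 2 : ℝ) : ℂ)/2 * Complex.I := by
  unfold zet
  have : 2 * (π:ℂ) * Complex.I / 8 = ((π/4 : ℝ) : ℂ) * Complex.I := by push_cast; ring
  rw [this, Complex.exp_mul_I, ← Complex.ofReal_cos, ← Complex.ofReal_sin,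
    Real.cos_pi_div_four, Real.sin_pi_div_four]
  push_cast
  ring


lemma Ac_even_zero (u e a : ℕ) (h : a % 2 = 0) : Ac u e a = 0 := by
  rw [Ac, if_neg (by omega)]

lemma sumA_expand (u e : ℕ) :
    ∑ a ∈ Finset.range 8, Ac u e a = Ac u e 1 + Ac u e 3 + Ac u e 5 + Ac u e 7 := by
  rw [Finset.sum_range_succ, Finset.sum_range_succ, Finset.sum_range_succ,
    Finset.sum_range_succ, Finset.sum_range_succ, Finset.sum_range_succ,
    Finset.sum_range_succ, Finset.sum_range_succ, Finset.sum_range_zero,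
    Ac_even_zero u e 0 rfl, Ac_even_zero u e 2 rfl, Ac_even_zero u e 4 rfl,
    Ac_even_zero u e 6 rfl]
  ring

lemma sumA_odd (u e : ℕ) (he : Odd e) (hu1 : u % 4 = 1) :
    ∑ a ∈ Finset.range 8, Ac u e a = 2 * ((Real.sqrt 2 : ℝ) : ℂ) := by
  have hu2 : Even (u / 2) := by
    refine Nat.even_iff.mpr ?_; omega
  have h1 : Ac u e 1 = zet := by
    rw [Ac, if_pos rfl, ZMod.χ₈_nat_eq_if_mod_eight]
    norm_num [Ee_eq_pow]
  have h3 : Ac u e 3 = -zet^3 := by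
    rw [Ac, if_pos rfl, ZMod.χ₈_nat_eq_if_mod_eight]
    norm_num [Ee_eq_pow, pow_mul, he.neg_one_pow, hu2.neg_one_pow]
  have h5 : Ac u e 5 = -zet^5 := by
    rw [Ac, if_pos rfl, ZMod.χ₈_nat_eq_if_mod_eight]
    norm_num [Ee_eq_pow, pow_mul, he.neg_one_pow, hu2.neg_one_pow]
  have h7 : Ac u e 7 = zet^7 := by
    rw [Ac, if_pos rfl, ZMod.χ₈_nat_eq_if_mod_eight]
    norm_num [Ee_eq_pow, pow_mul, he.neg_one_pow, hu2.neg_one_pow]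
  rw [sumA_expand, h1, h3, h5, h7]
  have h4z := zet_pow_four
  have hred : zet + -zet^3 + -zet^5 + zet^7 = 2*zet - 2*zet^3 := by
    linear_combination (zet^3 - zet) * h4z
  rw [hred]
  have h2 : zet^2 = Complex.I := zet_sq
  have hz := zet_val
  have : 2*zet - 2*zet^3 = 2*zet*(1 - zet^2) := by ring
  rw [this, h2, hz]
  linear_combination (-(((Real.sqrt 2:ℝ):ℂ))) * Complex.I_sq

lemma sumA_even (u e : ℕ) (he : Even e) :
    ∑ a ∈ Finset.range 8, Ac u e a = 0 := by
  rw [sumA_expand]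
  have h4z := zet_pow_four
  rcases Nat.even_or_odd (u / 2) with hpar | hpar
  · have h1 : Ac u e 1 = zet := by
      rw [Ac, if_pos rfl, ZMod.χ₈_nat_eq_if_mod_eight]
      norm_num [Ee_eq_pow]
    have h3 : Ac u e 3 = zet^3 := by
      rw [Ac, if_pos rfl, ZMod.χ₈_nat_eq_if_mod_eight]
      norm_num [Ee_eq_pow, pow_mul, he.neg_one_pow, hpar.neg_one_pow]
    have h5 : Ac u e 5 = zet^5 := by
      rw [Ac, if_pos rfl, ZMod.χ₈_nat_eq_if_mod_eight]
      norm_num [Ee_eq_pow, pow_mul, he.neg_one_pow, hpar.neg_one_pow]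
    have h7 : Ac u e 7 = zet^7 := by
      rw [Ac, if_pos rfl, ZMod.χ₈_nat_eq_if_mod_eight]
      norm_num [Ee_eq_pow, pow_mul, he.neg_one_pow, hpar.neg_one_pow]
    rw [h1, h3, h5, h7]
    linear_combination (zet + zet^3) * h4z
  · have h1 : Ac u e 1 = zet := by
      rw [Ac, if_pos rfl, ZMod.χ₈_nat_eq_if_mod_eight]
      norm_num [Ee_eq_pow]
    have h3 : Ac u e 3 = -zet^3 := by
      rw [Ac, if_pos rfl, ZMod.χ₈_nat_eq_if_mod_eight]
      norm_num [Ee_eq_pow, pow_mul, he.neg_one_pow, hpar.neg_one_pow]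
    have h5 : Ac u e 5 = zet^5 := by
      rw [Ac, if_pos rfl, ZMod.χ₈_nat_eq_if_mod_eight]
      norm_num [Ee_eq_pow, pow_mul, he.neg_one_pow, hpar.neg_one_pow]
    have h7 : Ac u e 7 = -zet^7 := by
      rw [Ac, if_pos rfl, ZMod.χ₈_nat_eq_if_mod_eight]
      norm_num [Ee_eq_pow, pow_mul, he.neg_one_pow, hpar.neg_one_pow]
    rw [h1, h3, h5, h7]
    linear_combination (zet - zet^3) * h4z

lemma Ac_add_four (u e : ℕ) (he : Odd e) (a : ℕ) :
    Ac u e ((a + 4) % 8) = Ac u e (a % 8) := by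
  have h4z := zet_pow_four
  have key : ∀ r, r < 8 → Ac u e ((r + 4) % 8) = Ac u e r := by
    intro r hr
    rcases Nat.even_or_odd (u / 2) with hpar | hpar
    · have h1 : Ac u e 1 = zet := by
        rw [Ac, if_pos rfl, ZMod.χ₈_nat_eq_if_mod_eight]
        norm_num [Ee_eq_pow]
      have h3 : Ac u e 3 = -zet^3 := by
        rw [Ac, if_pos rfl, ZMod.χ₈_nat_eq_if_mod_eight]
        norm_num [Ee_eq_pow, pow_mul, he.neg_one_pow, hpar.neg_one_pow]
      have h5 : Ac u e 5 = -zet^5 := by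
        rw [Ac, if_pos rfl, ZMod.χ₈_nat_eq_if_mod_eight]
        norm_num [Ee_eq_pow, pow_mul, he.neg_one_pow, hpar.neg_one_pow]
      have h7 : Ac u e 7 = zet^7 := by
        rw [Ac, if_pos rfl, ZMod.χ₈_nat_eq_if_mod_eight]
        norm_num [Ee_eq_pow, pow_mul, he.neg_one_pow, hpar.neg_one_pow]
      interval_cases r
      · rw [Ac_even_zero u e 4 rfl, Ac_even_zero u e 0 rfl]
      · show Ac u e 5 = Ac u e 1
        rw [h5, h1]; linear_combination (-zet) * h4z
      · rw [show (2+4)%8 = 6 from rfl, Ac_even_zero u e 6 rfl, Ac_even_zero u e 2 rfl]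
      · show Ac u e 7 = Ac u e 3
        rw [h7, h3]; linear_combination (zet^3) * h4z
      · rw [show (4+4)%8 = 0 from rfl, Ac_even_zero u e 0 rfl, Ac_even_zero u e 4 rfl]
      · show Ac u e 1 = Ac u e 5
        rw [h5, h1]; linear_combination (zet) * h4z
      · rw [show (6+4)%8 = 2 from rfl, Ac_even_zero u e 2 rfl, Ac_even_zero u e 6 rfl]
      · show Ac u e 3 = Ac u e 7
        rw [h7, h3]; linear_combination (-zet^3) * h4z
    · have h1 : Ac u e 1 = zet := by
        rw [Ac, if_pos rfl, ZMod.χ₈_nat_eq_if_mod_eight]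
        norm_num [Ee_eq_pow]
      have h3 : Ac u e 3 = zet^3 := by
        rw [Ac, if_pos rfl, ZMod.χ₈_nat_eq_if_mod_eight]
        norm_num [Ee_eq_pow, pow_mul, he.neg_one_pow, hpar.neg_one_pow]
      have h5 : Ac u e 5 = -zet^5 := by
        rw [Ac, if_pos rfl, ZMod.χ₈_nat_eq_if_mod_eight]
        norm_num [Ee_eq_pow, pow_mul, he.neg_one_pow, hpar.neg_one_pow]
      have h7 : Ac u e 7 = -zet^7 := by
        rw [Ac, if_pos rfl, ZMod.χ₈_nat_eq_if_mod_eight]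
        norm_num [Ee_eq_pow, pow_mul, he.neg_one_pow, hpar.neg_one_pow]
      interval_cases r
      · rw [Ac_even_zero u e 4 rfl, Ac_even_zero u e 0 rfl]
      · show Ac u e 5 = Ac u e 1
        rw [h5, h1]; linear_combination (-zet) * h4z
      · rw [show (2+4)%8 = 6 from rfl, Ac_even_zero u e 6 rfl, Ac_even_zero u e 2 rfl]
      · show Ac u e 7 = Ac u e 3
        rw [h7, h3]; linear_combination (-zet^3) * h4z
      · rw [show (4+4)%8 = 0 from rfl, Ac_even_zero u e 0 rfl, Ac_even_zero u e 4 rfl]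
      · show Ac u e 1 = Ac u e 5
        rw [h5, h1]; linear_combination (zet) * h4z
      · rw [show (6+4)%8 = 2 from rfl, Ac_even_zero u e 2 rfl, Ac_even_zero u e 6 rfl]
      · show Ac u e 3 = Ac u e 7
        rw [h7, h3]; linear_combination (zet^3) * h4z
  have h8 : (a + 4) % 8 = (a % 8 + 4) % 8 := by omega
  rw [h8, key (a % 8) (by omega)]


lemma pow_mul_eq_pow_mul {e u f w : ℕ} (hu : ¬ 2 ∣ u) (hw : ¬ 2 ∣ w)
    (h : 2^e * u = 2^f * w) : e = f ∧ u = w := by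
  have hu0 : u ≠ 0 := by rintro rfl; exact hu ⟨0, rfl⟩
  have hw0 : w ≠ 0 := by rintro rfl; exact hw ⟨0, rfl⟩
  have hfact : ∀ (g v : ℕ), v ≠ 0 → ¬ 2 ∣ v → (2^g * v).factorization 2 = g := by
    intro g v hv0 hv
    rw [Nat.factorization_mul (pow_ne_zero _ (by norm_num)) hv0]
    simp [Finsupp.add_apply, Nat.prime_two.factorization_pow, Nat.factorization_eq_zero_of_not_dvd hv]
  have hef : e = f := by
    have h1 := hfact e u hu0 hu
    have h2 := hfact f w hw0 hw
    rw [h] at h1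
    omega
  subst hef
  refine ⟨rfl, ?_⟩
  exact Nat.eq_of_mul_eq_mul_left (Nat.pow_pos (by norm_num) : 0 < 2^e) h

lemma square_cond (u e : ℕ) (hu2 : ¬ 2 ∣ u) (hu0 : 0 < u) :
    (∃ n : ℕ, 2^e * u = 2 * n^2) ↔ (Odd e ∧ IsSquare u) := by
  constructor
  · rintro ⟨n, hn⟩
    have hn0 : n ≠ 0 := by
      rintro rfl
      have : 0 < 2^e * u := Nat.mul_pos (Nat.pow_pos (by norm_num) : 0 < 2^e) hu0
      omega
    obtain ⟨t, w, hw, rfl⟩ := Nat.exists_eq_pow_mul_and_not_dvd hn0 2 (by norm_num)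
    have hkey : 2^e * u = 2^(2*t+1) * (w*w) := by
      rw [hn]; ring
    have hww : ¬ 2 ∣ (w * w) := by
      intro hd
      rcases (Nat.prime_two.dvd_mul.mp hd) with h|h <;> exact hw h
    obtain ⟨he, hueq⟩ := pow_mul_eq_pow_mul hu2 hww hkey
    exact ⟨he ▸ ⟨t, by omega⟩, ⟨w, hueq⟩⟩
  · rintro ⟨⟨t, ht⟩, ⟨v, hv⟩⟩
    exact ⟨2^t * v, by rw [ht, hv]; ring⟩

lemma Bc_add_mul (u j c : ℕ) : Bc u (j + c * u) = Bc u j := by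
  unfold Bc
  exact_mod_cast jac_congr u (by simp [Nat.ModEq, Nat.add_mul_mod_self_right])

lemma sum_periodic (G : ℕ → ℂ) (P : ℕ) (hG : ∀ j, G (j + P) = G j) (k : ℕ) :
    ∑ j ∈ Finset.range (k * P), G j = k * ∑ j ∈ Finset.range P, G j := by
  have hGmul : ∀ i j, G (j + i * P) = G j := by
    intro i
    induction i with
    | zero => simp
    | succ i ih =>
        intro j
        rw [Nat.succ_mul, ← Nat.add_assoc, hG (j + i * P), ih j]
  induction k with
  | zero => simp
  | succ k ih =>
      rw [Nat.succ_mul, Finset.sum_range_add, ih]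
      have : ∀ j, G (k * P + j) = G j := by
        intro j; rw [Nat.add_comm, hGmul k j]
      rw [Finset.sum_congr rfl fun j _ => this j]
      push_cast
      ring

lemma sum_blocks_eq (u e : ℕ) (hu : Odd u) [NeZero u] :
    ∑ j ∈ Finset.range (8 * u), Ac u e (j % 8) * Bc u j
      = (∑ a ∈ Finset.range 8, Ac u e a) * (∑ j ∈ Finset.range u, Bc u j) := by
  rw [mul_comm 8 u, sum_range_mul_blocks, Finset.sum_comm, Finset.sum_mul]
  apply Finset.sum_congr rfl
  intro a ha
  have ha8 : a < 8 := Finset.mem_range.mp ha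
  have hmod : ∀ i : ℕ, (8 * i + a) % 8 = a := by intro i; omega
  have hcop : Nat.Coprime 8 u := by
    have : Nat.Coprime (2^3) u := Nat.Coprime.pow_left 3 (Nat.coprime_two_left.mpr hu)
    simpa using this
  set w : (ZMod u)ˣ := ZMod.unitOfCoprime 8 hcop with hw
  have hstep : ∀ i : ℕ, Ac u e ((8*i + a) % 8) * Bc u (8*i + a)
      = Ac u e a * (fun x : ZMod u => Bc u x.val) ((a : ZMod u) + (w : ZMod u) * (i : ZMod u)) := by
    intro i
    rw [hmod i]
    congr 1
    rw [Bc_cast u (8*i+a)]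
    show Bc u (((8*i+a : ℕ) : ZMod u)).val = Bc u ((a + (w:ZMod u) * i).val)
    congr 1
    rw [hw, ZMod.coe_unitOfCoprime]
    push_cast
    ring
  rw [Finset.sum_congr rfl fun i _ => hstep i, ← Finset.mul_sum]
  congr 1
  rw [sum_range_zmod u (fun x => (fun y : ZMod u => Bc u y.val) ((a : ZMod u) + (w : ZMod u) * x)),
    sum_zmod_affine u (fun x : ZMod u => Bc u x.val) (a : ZMod u) w,
    ← sum_range_zmod u (fun x : ZMod u => Bc u x.val)]
  exact Finset.sum_congr rfl fun j _ => (Bc_cast u j).symm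

theorem kronecker_gauss_type_sum (m : ℕ) (hm : 0 < m) (heven : Even m) :
    ∑ j ∈ Finset.range (2 * m),
        ((kron (m : ℤ) j : ℤ) : ℂ) * Complex.exp (2 * π * Complex.I * j / 8) =
      if ∃ n : ℕ, m = 2 * n ^ 2 then ((Real.sqrt 2 : ℝ) : ℂ) * (m.totient : ℂ) else 0 := by
  obtain ⟨e, u, hu2, rfl⟩ := Nat.exists_eq_pow_mul_and_not_dvd hm.ne' 2 (by norm_num)
  have huodd : u % 2 = 1 := by omega
  have hu : Odd u := Nat.odd_iff.mpr huodd
  have hu0 : 0 < u := by omega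
  haveI : NeZero u := ⟨hu0.ne'⟩
  have he1 : 1 ≤ e := by
    by_contra h
    have he0 : e = 0 := by omega
    rw [he0] at heven
    simp only [pow_zero, one_mul] at heven
    rw [Nat.even_iff] at heven
    omega
  -- convert the summand
  have hconv : ∀ j : ℕ, ((kron ((2^e*u : ℕ) : ℤ) j : ℤ) : ℂ)
      * Complex.exp (2 * π * Complex.I * j / 8) = Ac u e (j % 8) * Bc u j := by
    intro j
    have := f_eq u e hu hu0 he1 j
    simpa only [Ee] using this
  rw [Finset.sum_congr rfl (fun j _ => hconv j)]
  set SA := ∑ a ∈ Finset.range 8, Ac u e a with hSA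
  set SB := ∑ j ∈ Finset.range u, Bc u j with hSB
  set G : ℕ → ℂ := fun j => Ac u e (j % 8) * Bc u j with hGdef
  have hper8 : ∀ j, G (j + 8*u) = G j := by
    intro j
    show Ac u e ((j + 8*u) % 8) * Bc u (j + 8*u) = Ac u e (j % 8) * Bc u j
    rw [Nat.add_mul_mod_self_left, Bc_add_mul u j 8]
  have hperN : ∀ j, G (j + 2*(2^e*u)) = G j := by
    intro j
    show Ac u e ((j + 2*(2^e*u)) % 8) * Bc u (j + 2*(2^e*u)) = Ac u e (j % 8) * Bc u j
    have hB : Bc u (j + 2*(2^e*u)) = Bc u j := by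
      rw [show j + 2*(2^e*u) = j + (2*2^e) * u from by ring, Bc_add_mul]
    rw [hB]
    congr 1
    rcases Nat.lt_or_ge e 2 with he2 | he2
    · -- e = 1
      have he : e = 1 := by omega
      subst he
      obtain ⟨t, rfl⟩ := hu
      have h1 : (j + 2*(2^1*(2*t+1))) % 8 = (j + 4) % 8 := by
        omega
      rw [h1, Ac_add_four _ 1 (by decide) j]
    · have h8 : (j + 2*(2^e*u)) % 8 = j % 8 := by
        have heq : 2*(2^e*u) = 8 * (2^(e-2)*u) := by
          obtain ⟨f, rfl⟩ : ∃ f, e = f + 2 := ⟨e - 2, by omega⟩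
          simp only [Nat.add_sub_cancel]
          ring
        rw [heq, Nat.add_mul_mod_self_left]
      rw [h8]
  have hdouble : (2 : ℂ) * ∑ j ∈ Finset.range (2*(2^e*u)), G j
      = ((2^(e-1) : ℕ) : ℂ) * (SA * SB) := by
    have hsplit : ∑ j ∈ Finset.range (2*(2^e*u) + 2*(2^e*u)), G j
        = 2 * ∑ j ∈ Finset.range (2*(2^e*u)), G j := by
      rw [Finset.sum_range_add]
      have : ∀ j, G (2*(2^e*u) + j) = G j := by
        intro j; rw [Nat.add_comm, hperN j]
      rw [Finset.sum_congr rfl fun j _ => this j]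
      ring
    have hrange : 2*(2^e*u) + 2*(2^e*u) = 2^(e-1) * (8*u) := by
      obtain ⟨f, rfl⟩ : ∃ f, e = f + 1 := ⟨e - 1, by omega⟩
      simp only [Nat.add_sub_cancel]
      ring
    rw [← hsplit, hrange, sum_periodic G (8*u) hper8 (2^(e-1))]
    rw [sum_blocks_eq u e hu]
  -- case analysis
  rcases Nat.even_or_odd e with hepar | hepar
  · have hSA0 : SA = 0 := sumA_even u e hepar
    have hS : ∑ j ∈ Finset.range (2*(2^e*u)), G j = 0 := by
      have h0 : (2:ℂ) * ∑ j ∈ Finset.range (2*(2^e*u)), G j = 0 := by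
        rw [hdouble, hSA0]; ring
      rcases mul_eq_zero.mp h0 with h|h
      · norm_num at h
      · exact h
    rw [if_neg, hS]
    intro ⟨n, hn⟩
    have := ((square_cond u e hu2 hu0).mp ⟨n, hn⟩).1
    exact (Nat.not_odd_iff_even.mpr hepar) this
  · by_cases hsq : IsSquare u
    · obtain ⟨v, hv⟩ := hsq
      have hvodd : Odd v := by
        rcases Nat.even_or_odd v with hev | hod
        · exfalso
          have hueven : Even u := hv ▸ hev.mul_right v
          rw [Nat.even_iff] at hueven
          omega
        · exact hod
      have hu41 : u % 4 = 1 := by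
        obtain ⟨t, rfl⟩ := hvodd
        have : u = 4*(t*t+t) + 1 := by rw [hv]; ring
        omega
      have hSAval : SA = 2 * ((Real.sqrt 2 : ℝ) : ℂ) := sumA_odd u e hepar hu41
      have hSBval : SB = (u.totient : ℂ) := by
        rw [hSB, sumB u hu hu0, if_pos ⟨v, hv⟩]
      have htot : (2^e*u).totient = 2^(e-1) * u.totient := by
        rw [Nat.totient_mul (Nat.Coprime.pow_left e (Nat.coprime_two_left.mpr hu)),
          Nat.totient_prime_pow Nat.prime_two (by omega : 0 < e)]
        ring_nf
      rw [if_pos ((square_cond u e hu2 hu0).mpr ⟨hepar, ⟨v, hv⟩⟩)]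
      apply mul_left_cancel₀ (two_ne_zero' ℂ)
      rw [hdouble, hSAval, hSBval, htot]
      push_cast
      ring
    · have hSB0 : SB = 0 := by rw [hSB, sumB u hu hu0, if_neg hsq]
      have hS : ∑ j ∈ Finset.range (2*(2^e*u)), G j = 0 := by
        have h0 : (2:ℂ) * ∑ j ∈ Finset.range (2*(2^e*u)), G j = 0 := by
          rw [hdouble, hSB0]; ring
        rcases mul_eq_zero.mp h0 with h|h
        · norm_num at h
        · exact h
      rw [if_neg, hS]
      intro ⟨n, hn⟩
      exact hsq ((square_cond u e hu2 hu0).mp ⟨n, hn⟩).2
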